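/- In the full-sensing case C = M, under the Markov dynamics where unsatisfied vertices resample each color with probability ≥ γ and satisfied vertices are frozen, starting from any assignment, the event that at each step all unsatisfied vertices switch to their target colors (under a fixed proper coloring a) terminates in at most N steps with all vertices satisfied, and has probability at least γ^{N(N+1)/2}. -/

import Mathlib

open MeasureTheory
set_option linter.unusedSectionVars false

/-- A vertex `i` is unsatisfied under assignment `x` (w.r.t. sensing edges `C`)
iff some sensed in-neighbor shares its color. -/
def CFLUnsat {V D : Type*} (C : Set (V × V)) (x : V → D) (i : V) : Prop :=
  ∃ j, (j, i) ∈ C ∧ x j = x i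

namespace CFLProof

attribute [local instance] Classical.propDecidable

variable {V D : Type*} [Fintype V]

/-- The deterministic target trajectory: every unsatisfied vertex switches to its
target color, satisfied vertices are frozen. -/
noncomputable def traj (M : Set (V × V)) (a x0 : V → D) : ℕ → V → D
  | 0 => x0
  | (t + 1) => fun i => if CFLUnsat M (traj M a x0 t) i then a i else traj M a x0 t i

/-- Unsatisfied vertices at time `t`. -/
noncomputable def U (M : Set (V × V)) (a x0 : V → D) (t : ℕ) : Finset V :=
  Finset.univ.filter fun i => CFLUnsat M (traj M a x0 t) i

/-- Vertices not at their target color at time `t`. -/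
noncomputable def B (M : Set (V × V)) (a x0 : V → D) (t : ℕ) : Finset V :=
  Finset.univ.filter fun i => traj M a x0 t i ≠ a i

variable {M : Set (V × V)} {a x0 : V → D}

lemma mem_U {t : ℕ} {i : V} : i ∈ U M a x0 t ↔ CFLUnsat M (traj M a x0 t) i := by
  simp [U]

lemma mem_B {t : ℕ} {i : V} : i ∈ B M a x0 t ↔ traj M a x0 t i ≠ a i := by
  simp [B]

lemma traj_succ_of_unsat {t : ℕ} {i : V} (h : CFLUnsat M (traj M a x0 t) i) :
    traj M a x0 (t + 1) i = a i := by simp [traj, h]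

lemma traj_succ_of_sat {t : ℕ} {i : V} (h : ¬ CFLUnsat M (traj M a x0 t) i) :
    traj M a x0 (t + 1) i = traj M a x0 t i := by simp [traj, h]

lemma B_succ_subset (t : ℕ) : B M a x0 (t + 1) ⊆ B M a x0 t := by
  intro i hi
  rw [mem_B] at hi ⊢
  by_cases h : CFLUnsat M (traj M a x0 t) i
  · exact absurd (traj_succ_of_unsat h) hi
  · rwa [traj_succ_of_sat h] at hi

lemma B_mono {s t : ℕ} (h : s ≤ t) : B M a x0 t ⊆ B M a x0 s := by
  induction t, h using Nat.le_induction with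
  | base => exact Finset.Subset.refl _
  | succ t ht ih => exact (B_succ_subset t).trans ih

lemma not_mem_B_succ {t : ℕ} {i : V} (h : i ∈ U M a x0 t) : i ∉ B M a x0 (t + 1) := by
  rw [mem_U] at h
  rw [mem_B, traj_succ_of_unsat h]
  simp

section props

variable (hsym : ∀ i j : V, (i, j) ∈ M → (j, i) ∈ M)
    (hproper : ∀ i j : V, (i, j) ∈ M → a i ≠ a j)

include hsym hproper in
/-- Key lemma: a vertex unsatisfied at time `t+1` was not at its target color at time `t`. -/
lemma U_succ_subset_B (t : ℕ) : U M a x0 (t + 1) ⊆ B M a x0 t := by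
  intro i hi
  rw [mem_U] at hi
  rw [mem_B]
  by_contra hti
  have h1i : traj M a x0 (t + 1) i = a i := by
    by_cases h : CFLUnsat M (traj M a x0 t) i
    · exact traj_succ_of_unsat h
    · rw [traj_succ_of_sat h, hti]
  obtain ⟨j, hjM, hje⟩ := hi
  by_cases hj : CFLUnsat M (traj M a x0 t) j
  · have : a j = a i := by rw [← traj_succ_of_unsat hj, hje, h1i]
    exact hproper j i hjM this
  · have hje' : traj M a x0 t j = a i := by
      rw [← traj_succ_of_sat hj, hje, h1i]
    exact hj ⟨i, hsym j i hjM, by rw [hti, hje']⟩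

include hsym hproper in
/-- If `U t` is nonempty, some vertex is both unsatisfied and off-target. -/
lemma exists_unsat_off_target {t : ℕ} (h : (U M a x0 t).Nonempty) :
    ∃ j, j ∈ U M a x0 t ∧ j ∈ B M a x0 t := by
  obtain ⟨i, hi⟩ := h
  by_cases hiB : i ∈ B M a x0 t
  · exact ⟨i, hi, hiB⟩
  · rw [mem_B, not_ne_iff] at hiB
    obtain ⟨j, hjM, hje⟩ := mem_U.mp hi
    refine ⟨j, mem_U.mpr ⟨i, hsym j i hjM, by rw [hje]⟩, mem_B.mpr ?_⟩
    rw [hje, hiB]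
    exact fun hc => hproper j i hjM hc.symm

include hsym hproper in
lemma B_card_lt {t : ℕ} (h : (U M a x0 t).Nonempty) :
    (B M a x0 (t + 1)).card < (B M a x0 t).card := by
  obtain ⟨j, hjU, hjB⟩ := exists_unsat_off_target hsym hproper h
  refine Finset.card_lt_card ?_
  rw [Finset.ssubset_iff_of_subset (B_succ_subset t)]
  exact ⟨j, hjB, not_mem_B_succ hjU⟩

include hproper in
lemma U_empty_of_B_empty {t : ℕ} (h : B M a x0 t = ∅) : U M a x0 t = ∅ := by
  rw [Finset.eq_empty_iff_forall_notMem] at h ⊢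
  intro i hi
  obtain ⟨j, hjM, hje⟩ := mem_U.mp hi
  have hti : traj M a x0 t i = a i := by
    by_contra hc; exact h i (mem_B.mpr hc)
  have htj : traj M a x0 t j = a j := by
    by_contra hc; exact h j (mem_B.mpr hc)
  exact hproper j i hjM (by rw [← htj, ← hti, hje])

include hsym hproper in
lemma exists_terminal :
    ∃ T, T ≤ Fintype.card V ∧ U M a x0 T = ∅ ∧ ∀ s < T, (U M a x0 s).Nonempty := by
  have hbound : ∀ t, (∀ s < t, (U M a x0 s).Nonempty) →
      (B M a x0 t).card + t ≤ Fintype.card V := by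
    intro t
    induction t with
    | zero => intro _; simpa using Finset.card_le_univ (B M a x0 0)
    | succ t ih =>
      intro hall
      have h1 := ih (fun s hs => hall s (hs.trans (Nat.lt_succ_self t)))
      have h2 := B_card_lt hsym hproper (hall t (Nat.lt_succ_self t))
      omega
  have hex : ∃ t, t ≤ Fintype.card V ∧ U M a x0 t = ∅ := by
    by_contra hc
    push_neg at hc
    have hall : ∀ s < Fintype.card V, (U M a x0 s).Nonempty := by
      intro s hs
      exact hc s hs.le
    have := hbound (Fintype.card V) hall
    have hB : B M a x0 (Fintype.card V) = ∅ := by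
      rw [← Finset.card_eq_zero]; omega
    exact (hc (Fintype.card V) le_rfl).ne_empty (U_empty_of_B_empty hproper hB)
  obtain ⟨t0, ht0N, ht0⟩ := hex
  have hex' : ∃ t, U M a x0 t = ∅ := ⟨t0, ht0⟩
  refine ⟨Nat.find hex', (Nat.find_min' hex' ht0).trans ht0N, Nat.find_spec hex', ?_⟩
  intro s hs
  exact Finset.nonempty_iff_ne_empty.mpr (Nat.find_min hex' hs)

variable (hirr : ∀ i : V, (i, i) ∉ M)

include hsym hirr in
lemma two_le_U_card {t : ℕ} (h : (U M a x0 t).Nonempty) : 2 ≤ (U M a x0 t).card := by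
  obtain ⟨i, hi⟩ := h
  obtain ⟨j, hjM, hje⟩ := mem_U.mp hi
  have hji : j ≠ i := fun hc => hirr i (hc ▸ hjM)
  have hj : j ∈ U M a x0 t := mem_U.mpr ⟨i, hsym j i hjM, hje.symm⟩
  exact Finset.one_lt_card.mpr ⟨i, hi, j, hj, hji.symm⟩

include hsym hproper in
lemma U_disjoint {s s' : ℕ} (h : s + 2 ≤ s') : Disjoint (U M a x0 s) (U M a x0 s') := by
  rw [Finset.disjoint_left]
  intro i hi hi'
  obtain ⟨k, rfl⟩ : ∃ k, s' = k + 1 := ⟨s' - 1, by omega⟩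
  have : i ∈ B M a x0 (s + 1) :=
    B_mono (by omega) (U_succ_subset_B hsym hproper k hi')
  exact not_mem_B_succ hi this

include hsym hirr hproper in
/-- The total number of resamplings is at most `N(N+1)/2`. -/
lemma sum_card_le {T : ℕ} (hT0 : U M a x0 T = ∅) (hmin : ∀ s < T, (U M a x0 s).Nonempty) :
    ∑ s ∈ Finset.range T, (U M a x0 s).card
      ≤ Fintype.card V * (Fintype.card V + 1) / 2 := by
  set N := Fintype.card V with hN
  obtain rfl | rfl | hT : T = 0 ∨ T = 1 ∨ 2 ≤ T := by omega
  · simp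
  · rw [Finset.sum_range_one]
    have h1 : (U M a x0 0).card ≤ N := by
      simpa using Finset.card_le_univ (U M a x0 0)
    have hpos : 1 ≤ N := by
      obtain ⟨i, _⟩ := hmin 0 Nat.one_pos
      have := Fintype.card_pos_iff (α := V) |>.mpr ⟨i⟩; omega
    have : N ≤ N * (N + 1) / 2 := by
      rw [Nat.le_div_iff_mul_le (by norm_num)]
      nlinarith
    omega
  · -- T ≥ 2 : show N ≥ 3
    have hU0 := hmin 0 (by omega)
    have hU1 := hmin 1 (by omega)
    have h2 : 2 ≤ N := le_trans (two_le_U_card hsym hirr hU0)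
      (by simpa using Finset.card_le_univ (U M a x0 0))
    have hN3 : 3 ≤ N := by
      rcases eq_or_lt_of_le h2 with h2' | h2'
      · exfalso
        -- N = 2: U 0 = univ, so traj 1 = a, so U 1 = ∅
        have hcard : (U M a x0 0).card = Fintype.card V := le_antisymm
          (by simpa using Finset.card_le_univ (U M a x0 0))
          (by rw [← hN, ← h2']; exact two_le_U_card hsym hirr hU0)
        have huniv : U M a x0 0 = Finset.univ := Finset.eq_univ_of_card _ hcard
        have hB1 : B M a x0 1 = ∅ := by
          rw [Finset.eq_empty_iff_forall_notMem]
          intro i hi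
          have hiu : CFLUnsat M (traj M a x0 0) i := by
            rw [← mem_U (t := 0), huniv]; exact Finset.mem_univ i
          exact (mem_B.mp hi) (traj_succ_of_unsat hiu)
        exact Finset.not_nonempty_empty (U_empty_of_B_empty hproper hB1 ▸ hU1)
      · omega
    -- pairwise disjointness within parity classes
    have hdisj : ∀ E : Finset ℕ, (∀ x ∈ E, ∀ y ∈ E, x ≠ y → x + 2 ≤ y ∨ y + 2 ≤ x) →
        ∑ s ∈ E, (U M a x0 s).card ≤ N := by
      intro E hp
      rw [← Finset.card_biUnion]
      · simpa using Finset.card_le_univ (E.biUnion (U M a x0))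
      · intro x hx y hy hxy
        rcases hp x hx y hy hxy with hlt | hlt
        · exact U_disjoint hsym hproper hlt
        · exact (U_disjoint hsym hproper hlt).symm
    have heven : ∑ s ∈ (Finset.range T).filter (fun s => Even s), (U M a x0 s).card ≤ N := by
      refine hdisj _ (fun x hx y hy hxy => ?_)
      rw [Finset.mem_filter, Nat.even_iff] at hx hy
      omega
    have hodd : ∑ s ∈ (Finset.range T).filter (fun s => ¬ Even s), (U M a x0 s).card ≤ N := by
      refine hdisj _ (fun x hx y hy hxy => ?_)
      rw [Finset.mem_filter, Nat.even_iff] at hx hy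
      omega
    have hsplit := Finset.sum_filter_add_sum_filter_not (Finset.range T)
      (fun s => Even s) (fun s => (U M a x0 s).card)
    have h2N : 2 * N ≤ N * (N + 1) / 2 := by
      rw [Nat.le_div_iff_mul_le (by norm_num)]
      nlinarith
    omega

end props

end CFLProof

open CFLProof in
/-- full sensing `C = M`: Under CFL dynamics, starting from any
assignment, with probability at least `γ^(N(N+1)/2)`, within at most `N` steps the
chain reaches an assignment with no unsatisfied vertex. -/
theorem full_sensing_convergence_prob {V D : Type*} [Fintype V] [Fintype D]
    (M : Set (V × V))
    (hsym : ∀ i j : V, (i, j) ∈ M → (j, i) ∈ M)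
    (hirr : ∀ i : V, (i, i) ∉ M)
    {Ω : Type*} [MeasurableSpace Ω]
    (μ : Measure Ω) [IsProbabilityMeasure μ]
    (X : ℕ → Ω → V → D) (γ : ℝ) (hγ : γ ∈ Set.Ioc (0 : ℝ) 1)
    (hstep : ∀ (t : ℕ) (h : ℕ → V → D),
      (∀ i : V, ¬ CFLUnsat M (h t) i → h (t + 1) i = h t i) →
      γ ^ (Nat.card {i : V // CFLUnsat M (h t) i}) * (μ {ω | ∀ s ≤ t, X s ω = h s}).toReal
        ≤ (μ {ω | ∀ s ≤ t + 1, X s ω = h s}).toReal)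
    (a : V → D) (hproper : ∀ i j : V, (i, j) ∈ M → a i ≠ a j)
    (x0 : V → D) :
    ∃ t ≤ Fintype.card V, ∃ y : V → D,
      (∀ i : V, ¬ CFLUnsat M y i) ∧
      γ ^ (Fintype.card V * (Fintype.card V + 1) / 2) * (μ {ω | X 0 ω = x0}).toReal
        ≤ (μ ({ω | X t ω = y} ∩ {ω | X 0 ω = x0})).toReal := by
  classical
  obtain ⟨T, hTN, hT0, hmin⟩ := exists_terminal (M := M) (a := a) (x0 := x0) hsym hproper
  have htraj0 : traj M a x0 0 = x0 := rfl
  refine ⟨T, hTN, traj M a x0 T, ?_, ?_⟩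
  · intro i hi
    rw [Finset.eq_empty_iff_forall_notMem] at hT0
    exact hT0 i (mem_U.mpr hi)
  · have hγ0 : (0 : ℝ) < γ := hγ.1
    have hγ1 : γ ≤ 1 := hγ.2
    have hcard : ∀ t : ℕ, Nat.card {i : V // CFLUnsat M (traj M a x0 t) i}
        = (U M a x0 t).card := by
      intro t
      rw [Nat.card_eq_fintype_card, Fintype.card_subtype]
      rfl
    have hfrozen : ∀ t : ℕ, ∀ i : V,
        ¬ CFLUnsat M (traj M a x0 t) i → traj M a x0 (t + 1) i = traj M a x0 t i :=
      fun t i h => traj_succ_of_sat h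
    -- chain inequality
    have hchain : ∀ t : ℕ,
        γ ^ (∑ s ∈ Finset.range t, (U M a x0 s).card)
            * (μ {ω | ∀ s ≤ 0, X s ω = traj M a x0 s}).toReal
          ≤ (μ {ω | ∀ s ≤ t, X s ω = traj M a x0 s}).toReal := by
      intro t
      induction t with
      | zero => simp
      | succ t ih =>
        have hst := hstep t (traj M a x0) (hfrozen t)
        rw [hcard t] at hst
        calc γ ^ (∑ s ∈ Finset.range (t + 1), (U M a x0 s).card)
              * (μ {ω | ∀ s ≤ 0, X s ω = traj M a x0 s}).toReal
            = γ ^ (U M a x0 t).card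
                * (γ ^ (∑ s ∈ Finset.range t, (U M a x0 s).card)
                  * (μ {ω | ∀ s ≤ 0, X s ω = traj M a x0 s}).toReal) := by
              rw [Finset.sum_range_succ, pow_add]; ring
          _ ≤ γ ^ (U M a x0 t).card
                * (μ {ω | ∀ s ≤ t, X s ω = traj M a x0 s}).toReal :=
              mul_le_mul_of_nonneg_left ih (pow_nonneg hγ0.le _)
          _ ≤ (μ {ω | ∀ s ≤ t + 1, X s ω = traj M a x0 s}).toReal := hst
    have h0set : {ω | ∀ s ≤ 0, X s ω = traj M a x0 s} = {ω | X 0 ω = x0} := by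
      ext ω
      simp only [Set.mem_setOf_eq, Nat.le_zero]
      constructor
      · intro h; rw [h 0 rfl, htraj0]
      · intro h s hs; rw [hs, htraj0]; exact h
    have hsub : {ω | ∀ s ≤ T, X s ω = traj M a x0 s}
        ⊆ {ω | X T ω = traj M a x0 T} ∩ {ω | X 0 ω = x0} := by
      intro ω hω
      exact ⟨hω T le_rfl, by rw [← htraj0]; exact hω 0 (Nat.zero_le T)⟩
    have hsum := sum_card_le (M := M) (a := a) (x0 := x0) hsym hproper hirr hT0 hmin
    calc γ ^ (Fintype.card V * (Fintype.card V + 1) / 2) * (μ {ω | X 0 ω = x0}).toReal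
        ≤ γ ^ (∑ s ∈ Finset.range T, (U M a x0 s).card) * (μ {ω | X 0 ω = x0}).toReal := by
          exact mul_le_mul_of_nonneg_right
            (pow_le_pow_of_le_one hγ0.le hγ1 hsum) ENNReal.toReal_nonneg
      _ = γ ^ (∑ s ∈ Finset.range T, (U M a x0 s).card)
            * (μ {ω | ∀ s ≤ 0, X s ω = traj M a x0 s}).toReal := by rw [h0set]
      _ ≤ (μ {ω | ∀ s ≤ T, X s ω = traj M a x0 s}).toReal := hchain T
      _ ≤ (μ ({ω | X T ω = traj M a x0 T} ∩ {ω | X 0 ω = x0})).toReal :=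
          ENNReal.toReal_mono (measure_ne_top μ _) (measure_mono hsub)
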